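/- Let (a_k)_{k≥1} be a sequence of nonnegative reals, let η ∈ (0,1) and C ≥ 0, and suppose Σ_{k=1}^n k a_k ≤ C n^{1−η} for all n ≥ 1. Then Σ_{k=n}^∞ a_k ≤ (2C/(2^η − 1)) n^{−η} for all n ≥ 1. -/

import Mathlib

/-- If `a_k ≥ 0` and `Σ_{k=1}^n k a_k ≤ C n^{1-η}` for all `n ≥ 1` (with `0 < η < 1`),
then the series converges and `Σ_{k=n}^∞ a_k ≤ (2C/(2^η - 1)) n^{-η}` for all `n ≥ 1`. -/
theorem stmt19 (a : ℕ → ℝ) (ha : ∀ k, 0 ≤ a k)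
    (η C : ℝ) (hη0 : 0 < η) (hη1 : η < 1) (hC : 0 ≤ C)
    (hsum : ∀ n : ℕ, 1 ≤ n →
      ∑ k ∈ Finset.Icc 1 n, (k : ℝ) * a k ≤ C * (n : ℝ) ^ (1 - η)) :
    (Summable fun k : ℕ => a (k + 1)) ∧
      ∀ n : ℕ, 1 ≤ n →
        ∑' k : ℕ, a (n + k) ≤ 2 * C / ((2 : ℝ) ^ η - 1) * (n : ℝ) ^ (-η) := by
  have hp1 : 1 < (2:ℝ) ^ η :=
    (Real.one_lt_rpow_iff_of_pos (by norm_num)).2 (Or.inl ⟨one_lt_two, hη0⟩)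
  have hr0 : (0:ℝ) < (2:ℝ) ^ (-η) := Real.rpow_pos_of_pos (by norm_num) _
  have hr1 : (2:ℝ) ^ (-η) < 1 :=
    Real.rpow_lt_one_of_one_lt_of_neg one_lt_two (neg_neg_of_pos hη0)
  -- block bound
  have block : ∀ M : ℕ, 1 ≤ M →
      ∑ k ∈ Finset.Ico M (2 * M), a k ≤ C * ((2 * M : ℕ) : ℝ) ^ (1 - η) / M := by
    intro M hM
    have hM0 : (0:ℝ) < (M:ℝ) := by exact_mod_cast hM
    rw [le_div_iff₀ hM0]
    calc (∑ k ∈ Finset.Ico M (2 * M), a k) * M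
        = ∑ k ∈ Finset.Ico M (2 * M), a k * M := by rw [Finset.sum_mul]
      _ ≤ ∑ k ∈ Finset.Ico M (2 * M), (k : ℝ) * a k := by
          refine Finset.sum_le_sum fun k hk => ?_
          rw [Finset.mem_Ico] at hk
          rw [mul_comm (a k)]
          exact mul_le_mul_of_nonneg_right (by exact_mod_cast hk.1) (ha k)
      _ ≤ ∑ k ∈ Finset.Icc 1 (2 * M), (k : ℝ) * a k := by
          refine Finset.sum_le_sum_of_subset_of_nonneg ?_ fun k hk _ => ?_
          · intro k hk
            rw [Finset.mem_Ico] at hk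
            rw [Finset.mem_Icc]
            omega
          · rw [Finset.mem_Icc] at hk
            exact mul_nonneg (by positivity) (ha k)
      _ ≤ C * ((2 * M : ℕ) : ℝ) ^ (1 - η) := hsum (2 * M) (by omega)
  -- dyadic induction: partial sums over Ico n (2^m * n)
  have key : ∀ n : ℕ, 1 ≤ n → ∀ m : ℕ,
      ∑ k ∈ Finset.Ico n (2 ^ m * n), a k ≤
        C * (2:ℝ) ^ (1 - η) * (n:ℝ) ^ (-η) * ∑ j ∈ Finset.range m, ((2:ℝ) ^ (-η)) ^ j := by
    intro n hn m
    induction m with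
    | zero => simp
    | succ m ih =>
      have hn0 : (0:ℝ) < (n:ℝ) := by exact_mod_cast hn
      have hle1 : n ≤ 2 ^ m * n := Nat.le_mul_of_pos_left n (by positivity)
      have hle2 : 2 ^ m * n ≤ 2 ^ (m + 1) * n := by
        apply Nat.mul_le_mul_right
        exact Nat.pow_le_pow_right (by norm_num) (by omega)
      have hsplit : ∑ k ∈ Finset.Ico n (2 ^ (m+1) * n), a k =
          (∑ k ∈ Finset.Ico n (2 ^ m * n), a k) +
          ∑ k ∈ Finset.Ico (2 ^ m * n) (2 ^ (m+1) * n), a k :=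
        (Finset.sum_Ico_consecutive _ hle1 hle2).symm
      have hM : 1 ≤ 2 ^ m * n := le_trans hn hle1
      have hblock := block (2 ^ m * n) hM
      have h2 : (2 ^ (m+1) * n) = 2 * (2 ^ m * n) := by ring
      -- rewrite the block bound in rpow form
      have hMr : (0:ℝ) < ((2 ^ m * n : ℕ) : ℝ) := by exact_mod_cast hM
      have hrpow : C * ((2 * (2 ^ m * n) : ℕ) : ℝ) ^ (1 - η) / ((2 ^ m * n : ℕ) : ℝ) =
          C * (2:ℝ) ^ (1 - η) * (n:ℝ) ^ (-η) * ((2:ℝ) ^ (-η)) ^ m := by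
        have hcast : ((2 * (2 ^ m * n) : ℕ) : ℝ) = 2 * ((2:ℝ) ^ m * (n:ℝ)) := by
          push_cast; ring
        have hcast2 : ((2 ^ m * n : ℕ) : ℝ) = (2:ℝ) ^ m * (n:ℝ) := by push_cast; ring
        rw [hcast, hcast2]
        have h2m : (0:ℝ) < (2:ℝ) ^ m := by positivity
        rw [Real.mul_rpow (by norm_num) (by positivity),
            Real.mul_rpow h2m.le hn0.le]
        have e1 : ((2:ℝ) ^ m) ^ (1 - η) = (2:ℝ) ^ m * ((2:ℝ) ^ (-η)) ^ m := by
          rw [← Real.rpow_natCast ((2:ℝ)) m, ← Real.rpow_mul (by norm_num),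
              ← Real.rpow_natCast ((2:ℝ) ^ (-η)) m, ← Real.rpow_mul (by norm_num),
              ← Real.rpow_add (by norm_num : (0:ℝ) < 2)]
          congr 1
          ring
        have e2 : (n:ℝ) ^ (1 - η) = (n:ℝ) * (n:ℝ) ^ (-η) := by
          rw [show (1 - η) = 1 + (-η) by ring, Real.rpow_add hn0, Real.rpow_one]
        rw [e1, e2]
        field_simp
      rw [hsplit, Finset.sum_range_succ]
      have hb2 : ∑ k ∈ Finset.Ico (2 ^ m * n) (2 ^ (m+1) * n), a k ≤
          C * (2:ℝ) ^ (1 - η) * (n:ℝ) ^ (-η) * ((2:ℝ) ^ (-η)) ^ m := by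
        rw [h2]
        calc ∑ k ∈ Finset.Ico (2 ^ m * n) (2 * (2 ^ m * n)), a k
            ≤ C * ((2 * (2 ^ m * n) : ℕ) : ℝ) ^ (1 - η) / ((2 ^ m * n : ℕ) : ℝ) := hblock
          _ = _ := hrpow
      linarith [ih, hb2]
  -- uniform partial sum bound
  have hB : ∀ n : ℕ, 1 ≤ n → ∀ N : ℕ,
      ∑ k ∈ Finset.Ico n N, a k ≤ 2 * C / ((2:ℝ) ^ η - 1) * (n:ℝ) ^ (-η) := by
    intro n hn N
    obtain ⟨m, hm⟩ : ∃ m : ℕ, N ≤ 2 ^ m * n := ⟨N, le_trans (Nat.le_of_lt (Nat.lt_two_pow_self (n := N))) (Nat.le_mul_of_pos_right _ hn)⟩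
    have step1 : ∑ k ∈ Finset.Ico n N, a k ≤ ∑ k ∈ Finset.Ico n (2 ^ m * n), a k := by
      refine Finset.sum_le_sum_of_subset_of_nonneg ?_ fun k _ _ => ha k
      apply Finset.Ico_subset_Ico le_rfl hm
    have hgeom : ∑ j ∈ Finset.range m, ((2:ℝ) ^ (-η)) ^ j ≤ 1 / (1 - (2:ℝ) ^ (-η)) := by
      have e : (((2:ℝ) ^ (-η)) ^ m - 1) / ((2:ℝ) ^ (-η) - 1) =
          (1 - ((2:ℝ) ^ (-η)) ^ m) / (1 - (2:ℝ) ^ (-η)) := by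
        rw [← neg_div_neg_eq]; ring_nf
      rw [geom_sum_eq (ne_of_lt hr1), e]
      have h1 : (0:ℝ) < 1 - (2:ℝ) ^ (-η) := by linarith
      rw [div_le_div_iff₀ h1 h1]
      have : (0:ℝ) ≤ ((2:ℝ) ^ (-η)) ^ m := by positivity
      nlinarith
    have hfinal : C * (2:ℝ) ^ (1 - η) * (n:ℝ) ^ (-η) * (1 / (1 - (2:ℝ) ^ (-η))) =
        2 * C / ((2:ℝ) ^ η - 1) * (n:ℝ) ^ (-η) := by
      have e1 : (2:ℝ) ^ (1 - η) = 2 * ((2:ℝ) ^ η)⁻¹ := by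
        rw [Real.rpow_sub (by norm_num), Real.rpow_one, div_eq_mul_inv]
      have e2 : (2:ℝ) ^ (-η) = ((2:ℝ) ^ η)⁻¹ := Real.rpow_neg (by norm_num) η
      rw [e1, e2]
      have hp0 : (0:ℝ) < (2:ℝ) ^ η := by positivity
      field_simp
    calc ∑ k ∈ Finset.Ico n N, a k
        ≤ ∑ k ∈ Finset.Ico n (2 ^ m * n), a k := step1
      _ ≤ C * (2:ℝ) ^ (1 - η) * (n:ℝ) ^ (-η) * ∑ j ∈ Finset.range m, ((2:ℝ) ^ (-η)) ^ j :=
          key n hn m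
      _ ≤ C * (2:ℝ) ^ (1 - η) * (n:ℝ) ^ (-η) * (1 / (1 - (2:ℝ) ^ (-η))) := by
          apply mul_le_mul_of_nonneg_left hgeom
          positivity
      _ = _ := hfinal
  -- summability
  have hsummable : Summable fun k : ℕ => a (k + 1) := by
    apply summable_of_sum_range_le (c := 2 * C / ((2:ℝ) ^ η - 1) * (1:ℝ) ^ (-η))
    · intro k; exact ha _
    · intro N
      have := hB 1 le_rfl (1 + N)
      rw [Finset.sum_Ico_eq_sum_range] at this
      simpa [add_comm] using this
  refine ⟨hsummable, fun n hn => ?_⟩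
  have hsummable2 : Summable fun k : ℕ => a (n + k) := by
    have h1 : Summable a := (summable_nat_add_iff 1).mp hsummable
    have := (summable_nat_add_iff n).mpr h1
    simpa [add_comm] using this
  apply Summable.tsum_le_of_sum_range_le hsummable2
  intro N
  have := hB n hn (n + N)
  rw [Finset.sum_Ico_eq_sum_range] at this
  simpa using this
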